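/- The inequality (2/3)x + (1/3)x·cos(x) − sin(x) > 0 holds for all x in (0, ∞). -/

import Mathlib

open Real

lemma sub_cube_le_sin : ∀ x : ℝ, 0 ≤ x → x - x^3/6 ≤ Real.sin x := by
  intro x hx
  have h : MonotoneOn (fun x : ℝ => Real.sin x - (x - x^3/6)) (Set.Ici 0) := by
    apply monotoneOn_of_deriv_nonneg (convex_Ici 0)
    · fun_prop
    · fun_prop
    · intro y hy
      have H : HasDerivAt (fun x : ℝ => Real.sin x - (x - x^3/6))
          (Real.cos y - (1 - y^2/2)) y := by
        have h2 : HasDerivAt (fun x : ℝ => x - x^3/6) (1 - y^2/2) y := by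
          have := (hasDerivAt_id y).sub ((hasDerivAt_pow 3 y).div_const 6)
          exact this.congr_deriv (by push_cast; ring)
        exact (Real.hasDerivAt_sin y).sub h2
      rw [H.deriv]
      have := Real.one_sub_sq_div_two_le_cos (x := y)
      linarith
  have := h (Set.mem_Ici.2 le_rfl) (Set.mem_Ici.2 hx) hx
  simp at this
  linarith

lemma cos_le_quartic : ∀ x : ℝ, 0 ≤ x → Real.cos x ≤ 1 - x^2/2 + x^4/24 := by
  intro x hx
  have h : MonotoneOn (fun x : ℝ => (1 - x^2/2 + x^4/24) - Real.cos x) (Set.Ici 0) := by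
    apply monotoneOn_of_deriv_nonneg (convex_Ici 0)
    · fun_prop
    · fun_prop
    · intro y hy
      simp only [interior_Ici, Set.mem_Ioi] at hy
      have H : HasDerivAt (fun x : ℝ => (1 - x^2/2 + x^4/24) - Real.cos x)
          (Real.sin y - (y - y^3/6)) y := by
        have h2 : HasDerivAt (fun x : ℝ => 1 - x^2/2 + x^4/24) (-(y - y^3/6)) y := by
          have := (((hasDerivAt_const y (1:ℝ)).sub ((hasDerivAt_pow 2 y).div_const 2)).add
            ((hasDerivAt_pow 4 y).div_const 24))
          exact this.congr_deriv (by push_cast; ring)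
        have := h2.sub (Real.hasDerivAt_cos y)
        exact this.congr_deriv (by ring)
      rw [H.deriv]
      have := sub_cube_le_sin y hy.le
      linarith
  have := h (Set.mem_Ici.2 le_rfl) (Set.mem_Ici.2 hx) hx
  simp at this
  linarith

lemma sin_le_quintic : ∀ x : ℝ, 0 ≤ x → Real.sin x ≤ x - x^3/6 + x^5/120 := by
  intro x hx
  have h : MonotoneOn (fun x : ℝ => (x - x^3/6 + x^5/120) - Real.sin x) (Set.Ici 0) := by
    apply monotoneOn_of_deriv_nonneg (convex_Ici 0)
    · fun_prop
    · fun_prop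
    · intro y hy
      simp only [interior_Ici, Set.mem_Ioi] at hy
      have H : HasDerivAt (fun x : ℝ => (x - x^3/6 + x^5/120) - Real.sin x)
          ((1 - y^2/2 + y^4/24) - Real.cos y) y := by
        have h2 : HasDerivAt (fun x : ℝ => x - x^3/6 + x^5/120) (1 - y^2/2 + y^4/24) y := by
          have := (((hasDerivAt_id y).sub ((hasDerivAt_pow 3 y).div_const 6)).add
            ((hasDerivAt_pow 5 y).div_const 120))
          exact this.congr_deriv (by push_cast; ring)
        exact h2.sub (Real.hasDerivAt_sin y)
      rw [H.deriv]
      have := cos_le_quartic y hy.le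
      linarith
  have := h (Set.mem_Ici.2 le_rfl) (Set.mem_Ici.2 hx) hx
  simp at this
  linarith

lemma sextic_le_cos : ∀ x : ℝ, 0 ≤ x → 1 - x^2/2 + x^4/24 - x^6/720 ≤ Real.cos x := by
  intro x hx
  have h : MonotoneOn (fun x : ℝ => Real.cos x - (1 - x^2/2 + x^4/24 - x^6/720)) (Set.Ici 0) := by
    apply monotoneOn_of_deriv_nonneg (convex_Ici 0)
    · fun_prop
    · fun_prop
    · intro y hy
      simp only [interior_Ici, Set.mem_Ioi] at hy
      have H : HasDerivAt (fun x : ℝ => Real.cos x - (1 - x^2/2 + x^4/24 - x^6/720))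
          ((y - y^3/6 + y^5/120) - Real.sin y) y := by
        have h2 : HasDerivAt (fun x : ℝ => 1 - x^2/2 + x^4/24 - x^6/720)
            (-(y - y^3/6 + y^5/120)) y := by
          have := ((((hasDerivAt_const y (1:ℝ)).sub ((hasDerivAt_pow 2 y).div_const 2)).add
            ((hasDerivAt_pow 4 y).div_const 24)).sub ((hasDerivAt_pow 6 y).div_const 720))
          exact this.congr_deriv (by push_cast; ring)
        have := (Real.hasDerivAt_cos y).sub h2
        exact this.congr_deriv (by ring)
      rw [H.deriv]
      have := sin_le_quintic y hy.le
      linarith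
  have := h (Set.mem_Ici.2 le_rfl) (Set.mem_Ici.2 hx) hx
  simp at this
  linarith

theorem stmt_13 :
    ∀ x : ℝ, 0 < x →
      0 < (2/3) * x + (1/3) * x * Real.cos x - Real.sin x := by
  intro x hx
  rcases le_or_gt x 3 with h3 | h3
  · have hc := sextic_le_cos x hx.le
    have hs := sin_le_quintic x hx.le
    have h1 : 0 ≤ x * Real.cos x - (x - x^3/2 + x^5/24 - x^7/720) := by
      nlinarith [mul_nonneg hx.le (sub_nonneg.2 hc)]
    have hsq : x^2 < 12 := by nlinarith
    have h2 : 0 < 12*x^5 - x^7 := by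
      nlinarith [mul_pos (pow_pos hx 5) (sub_pos.2 hsq)]
    linarith
  · have hc := Real.neg_one_le_cos x
    have hs := Real.sin_le_one x
    nlinarith [mul_nonneg (by linarith : (0:ℝ) ≤ x) (by linarith : (0:ℝ) ≤ 1 + Real.cos x)]
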